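/- For every integer n ≥ 2, the derivative at x = 1 of the polynomial H(x) = 4n·x + 4·Σ_{k=2}^{n−1}(n−k+2)x^{3k−2} + 4·Σ_{k=1}^{n−1}(2n−2k)x^{3k−1} + 4·Σ_{k=1}^{n−1}(n−k)x^{3k} + 4x^{3n−2} equals 8n³ + 4n² − 16n + 4. -/

import Mathlib

open Finset

lemma sumA (n : ℝ) (m : ℕ) (hm : 1 ≤ m) :
    ∑ k ∈ Finset.Icc 2 m, (n - k + 2) * ((3 * k - 2 : ℕ) : ℝ)
      = (n + 2) * (3 * (m : ℝ) ^ 2 - m - 2) / 2 - m * (m + 1) * (2 * m - 1) / 2 + 1 := by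
  induction m, hm using Nat.le_induction with
  | base => simp; ring
  | succ m hm ih =>
    rw [Finset.sum_Icc_succ_top (by omega)]
    have h : (3 * (m + 1) - 2 : ℕ) = 3 * m + 1 := by omega
    rw [ih, h]
    push_cast
    ring

lemma sumB (n : ℝ) (m : ℕ) :
    ∑ k ∈ Finset.Icc 1 m, (2 * n - 2 * k) * ((3 * k - 1 : ℕ) : ℝ)
      = n * m * (3 * m + 1) - 2 * (m : ℝ) ^ 2 * (m + 1) := by
  induction m with
  | zero => simp
  | succ m ih =>
    rw [Finset.sum_Icc_succ_top (by omega), ih]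
    have h : (3 * (m + 1) - 1 : ℕ) = 3 * m + 2 := by omega
    rw [h]
    push_cast
    ring

lemma sumC (n : ℝ) (m : ℕ) :
    ∑ k ∈ Finset.Icc 1 m, (n - k) * ((3 * k : ℕ) : ℝ)
      = 3 * n * m * (m + 1) / 2 - m * (m + 1) * (2 * m + 1) / 2 := by
  induction m with
  | zero => simp
  | succ m ih =>
    rw [Finset.sum_Icc_succ_top (by omega), ih]
    push_cast
    ring

theorem stmt_11 (n : ℕ) (hn : 2 ≤ n) :
    deriv (fun x : ℝ => 4 * (n : ℝ) * x
      + 4 * ∑ k ∈ Finset.Icc 2 (n - 1), ((n : ℝ) - k + 2) * x ^ (3 * k - 2)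
      + 4 * ∑ k ∈ Finset.Icc 1 (n - 1), (2 * (n : ℝ) - 2 * k) * x ^ (3 * k - 1)
      + 4 * ∑ k ∈ Finset.Icc 1 (n - 1), ((n : ℝ) - k) * x ^ (3 * k)
      + 4 * x ^ (3 * n - 2)) 1
    = 8 * (n : ℝ) ^ 3 + 4 * (n : ℝ) ^ 2 - 16 * (n : ℝ) + 4 := by
  have h1 : HasDerivAt (fun x : ℝ => 4 * (n : ℝ) * x) (4 * (n : ℝ)) 1 := by
    simpa using (hasDerivAt_id (1 : ℝ)).const_mul (4 * (n : ℝ))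
  have h2 : HasDerivAt
      (fun x : ℝ => 4 * ∑ k ∈ Finset.Icc 2 (n - 1), ((n : ℝ) - k + 2) * x ^ (3 * k - 2))
      (4 * ∑ k ∈ Finset.Icc 2 (n - 1), ((n : ℝ) - k + 2) * ((3 * k - 2 : ℕ) : ℝ)) 1 := by
    have := HasDerivAt.sum (u := Finset.Icc 2 (n - 1))
      (fun k _ => (hasDerivAt_pow (3 * k - 2) (1 : ℝ)).const_mul ((n : ℝ) - k + 2))
    simpa using this.const_mul 4
  have h3 : HasDerivAt
      (fun x : ℝ => 4 * ∑ k ∈ Finset.Icc 1 (n - 1), (2 * (n : ℝ) - 2 * k) * x ^ (3 * k - 1))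
      (4 * ∑ k ∈ Finset.Icc 1 (n - 1), (2 * (n : ℝ) - 2 * k) * ((3 * k - 1 : ℕ) : ℝ)) 1 := by
    have := HasDerivAt.sum (u := Finset.Icc 1 (n - 1))
      (fun k _ => (hasDerivAt_pow (3 * k - 1) (1 : ℝ)).const_mul (2 * (n : ℝ) - 2 * k))
    simpa using this.const_mul 4
  have h4 : HasDerivAt
      (fun x : ℝ => 4 * ∑ k ∈ Finset.Icc 1 (n - 1), ((n : ℝ) - k) * x ^ (3 * k))
      (4 * ∑ k ∈ Finset.Icc 1 (n - 1), ((n : ℝ) - k) * ((3 * k : ℕ) : ℝ)) 1 := by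
    have := HasDerivAt.sum (u := Finset.Icc 1 (n - 1))
      (fun k _ => (hasDerivAt_pow (3 * k) (1 : ℝ)).const_mul ((n : ℝ) - k))
    simpa using this.const_mul 4
  have h5 : HasDerivAt (fun x : ℝ => 4 * x ^ (3 * n - 2)) (4 * ((3 * n - 2 : ℕ) : ℝ)) 1 := by
    simpa using (hasDerivAt_pow (3 * n - 2) (1 : ℝ)).const_mul (4 : ℝ)
  have H := (((h1.add h2).add h3).add h4).add h5
  erw [H.deriv]
  rw [sumA ((n : ℝ)) (n - 1) (by omega), sumB, sumC]
  have hm : ((n - 1 : ℕ) : ℝ) = (n : ℝ) - 1 := by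
    have : (1 : ℕ) ≤ n := by omega
    push_cast [Nat.cast_sub this]; ring
  have he : ((3 * n - 2 : ℕ) : ℝ) = 3 * (n : ℝ) - 2 := by
    have : (2 : ℕ) ≤ 3 * n := by omega
    push_cast [Nat.cast_sub this]; ring
  rw [hm, he]
  ring
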